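/- Let p be an odd prime not dividing 2PQD. Then P·(P^{p-1} - Q^{(p-1)/2}) ≡ D · U_{(p-1)/2} · U_{(p+1)/2} (mod p). -/

import Mathlib

def lucasU (P Q : ℤ) : ℕ → ℤ
  | 0 => 0
  | 1 => 1
  | n + 2 => P * lucasU P Q (n + 1) - Q * lucasU P Q n

def lucasV (P Q : ℤ) : ℕ → ℤ
  | 0 => 2
  | 1 => P
  | n + 2 => P * lucasV P Q (n + 1) - Q * lucasV P Q n

lemma lucasU_cast_aux {R : Type*} [CommRing R] (P Q : ℤ) (a b : R)
    (hab : a + b = (P : R)) (hmul : a * b = (Q : R)) :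
    ∀ n : ℕ, ((lucasU P Q n : ℤ) : R) * (a - b) = a ^ n - b ^ n := by
  intro n
  induction n using Nat.twoStepInduction with
  | zero => simp [lucasU]
  | one => simp [lucasU]
  | more n ih1 ih2 =>
    have hrec : (lucasU P Q (n + 2) : R) = (P : R) * (lucasU P Q (n + 1) : R)
        - (Q : R) * (lucasU P Q n : R) := by
      rw [show lucasU P Q (n + 2) = P * lucasU P Q (n + 1) - Q * lucasU P Q n from rfl]
      push_cast; ring
    rw [hrec, ← hab, ← hmul]
    calc ((a + b) * (lucasU P Q (n + 1) : R) - a * b * (lucasU P Q n : R)) * (a - b)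
        = (a + b) * ((lucasU P Q (n + 1) : R) * (a - b))
          - a * b * ((lucasU P Q n : R) * (a - b)) := by ring
      _ = (a + b) * (a ^ (n + 1) - b ^ (n + 1)) - a * b * (a ^ n - b ^ n) := by rw [ih2, ih1]
      _ = a ^ (n + 2) - b ^ (n + 2) := by ring

lemma main_aux {R : Type*} [CommRing R] (P Q : ℤ) (p k : ℕ) (hp : p.Prime) [CharP R p]
    (hpk : p = 2 * k + 1) (a b : R) (hab : a + b = (P : R)) (hmul : a * b = (Q : R)) :
    ((P * (P ^ (2 * k) - Q ^ k) : ℤ) : R) =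
      (((P ^ 2 - 4 * Q) * lucasU P Q k * lucasU P Q (k + 1) : ℤ) : R) := by
  haveI : Fact p.Prime := ⟨hp⟩
  have hU := lucasU_cast_aux P Q a b hab hmul
  have hfrob : a ^ (2 * k + 1) + b ^ (2 * k + 1) = (P : R) ^ (2 * k + 1) := by
    rw [← hab, ← hpk, add_pow_char]
  have hexp : a ^ k * b ^ k = (Q : R) ^ k := by rw [← hmul, mul_pow]
  have hDab : (P : R) ^ 2 - 4 * (Q : R) = (a - b) ^ 2 := by
    linear_combination (-(a + b + (P : R))) * hab + 4 * hmul
  have key : (a ^ k - b ^ k) * (a ^ (k + 1) - b ^ (k + 1)) =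
      (P : R) ^ (2 * k + 1) - (Q : R) ^ k * (P : R) := by
    calc (a ^ k - b ^ k) * (a ^ (k + 1) - b ^ (k + 1))
        = (a ^ (2 * k + 1) + b ^ (2 * k + 1)) - a ^ k * b ^ k * (a + b) := by ring
      _ = (P : R) ^ (2 * k + 1) - (Q : R) ^ k * (P : R) := by rw [hfrob, hexp, hab]
  push_cast
  rw [hDab]
  calc (P : R) * ((P : R) ^ (2 * k) - (Q : R) ^ k)
      = (P : R) ^ (2 * k + 1) - (Q : R) ^ k * (P : R) := by ring
    _ = (a ^ k - b ^ k) * (a ^ (k + 1) - b ^ (k + 1)) := key.symm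
    _ = ((lucasU P Q k : ℤ) : R) * (a - b) * (((lucasU P Q (k + 1) : ℤ) : R) * (a - b)) := by
        rw [hU k, hU (k + 1)]
    _ = (a - b) ^ 2 * ((lucasU P Q k : ℤ) : R) * ((lucasU P Q (k + 1) : ℤ) : R) := by ring

theorem lucasUU_half_mod (P Q : ℤ) (p : ℕ) (hp : p.Prime) (hodd : p ≠ 2)
    (hdvd : ¬ (p : ℤ) ∣ 2 * P * Q * (P ^ 2 - 4 * Q)) :
    P * (P ^ (p - 1) - Q ^ ((p - 1) / 2)) ≡
      (P ^ 2 - 4 * Q) * lucasU P Q ((p - 1) / 2) * lucasU P Q ((p + 1) / 2) [ZMOD p] := by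
  haveI : Fact p.Prime := ⟨hp⟩
  obtain ⟨k, hk⟩ := hp.odd_of_ne_two hodd
  have hp2 : 2 ≤ p := hp.two_le
  rw [show (p - 1) / 2 = k by omega, show (p + 1) / 2 = k + 1 by omega,
    show p - 1 = 2 * k by omega]
  rw [← ZMod.intCast_eq_intCast_iff]
  set f : Polynomial (ZMod p) :=
    Polynomial.X ^ 2 - Polynomial.C (P : ZMod p) * Polynomial.X + Polynomial.C (Q : ZMod p)
    with hf
  have hfdeg : f.degree = 2 := by
    unfold f
    compute_degree!
  haveI hnt : Nontrivial (AdjoinRoot f) := AdjoinRoot.nontrivial f (by rw [hfdeg]; norm_num)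
  haveI : CharP (AdjoinRoot f) p := charP_of_injective_algebraMap' (ZMod p) p
  have haroot : (AdjoinRoot.root f) ^ 2 - ((P : ℤ) : AdjoinRoot f) * AdjoinRoot.root f
      + ((Q : ℤ) : AdjoinRoot f) = 0 := by
    have h0 := AdjoinRoot.eval₂_root f
    rw [hf] at h0
    simp only [Polynomial.eval₂_add, Polynomial.eval₂_sub, Polynomial.eval₂_mul,
      Polynomial.eval₂_pow, Polynomial.eval₂_X, Polynomial.eval₂_C] at h0
    rw [map_intCast, map_intCast] at h0
    exact h0
  have hab : AdjoinRoot.root f + (((P : ℤ) : AdjoinRoot f) - AdjoinRoot.root f)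
      = ((P : ℤ) : AdjoinRoot f) := by ring
  have hmul : AdjoinRoot.root f * (((P : ℤ) : AdjoinRoot f) - AdjoinRoot.root f)
      = ((Q : ℤ) : AdjoinRoot f) := by linear_combination -haroot
  have key := main_aux P Q p k hp (by omega) (AdjoinRoot.root f) _ hab hmul
  apply (algebraMap (ZMod p) (AdjoinRoot f)).injective
  rw [map_intCast, map_intCast]
  exact key
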